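/- If μ(A) < 0, then solutions of the matrix Riccati equation ∂_t P_t = A P_t + P_t Aᵀ − P_t S P_t + R with positive semi-definite data satisfy sup_{t≥0} tr(P_t) < ∞, or equivalently sup_{t≥0} ‖P_t‖_F < ∞. -/

import Mathlib

open Matrix MeasureTheory Real
open scoped ENNReal

noncomputable section

/-- The symmetric part `(A + Aᵀ)/2` of a square real matrix. -/
def symmPart {r : ℕ} (A : Matrix (Fin r) (Fin r) ℝ) : Matrix (Fin r) (Fin r) ℝ :=
  (1 / 2 : ℝ) • (A + Aᵀ)

lemma symmPart_isHermitian {r : ℕ} (A : Matrix (Fin r) (Fin r) ℝ) :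
    (symmPart A).IsHermitian := by
  unfold symmPart Matrix.IsHermitian
  ext i j
  simp [Matrix.conjTranspose_apply, Matrix.smul_apply, Matrix.add_apply,
    Matrix.transpose_apply]
  ring

/-- The largest eigenvalue of a Hermitian real matrix. -/
def lambdaMax {n : Type*} [Fintype n] [DecidableEq n] {A : Matrix n n ℝ}
    (hA : A.IsHermitian) : ℝ := ⨆ i, hA.eigenvalues i

/-- The smallest eigenvalue of a Hermitian real matrix. -/
def lambdaMin {n : Type*} [Fintype n] [DecidableEq n] {A : Matrix n n ℝ}
    (hA : A.IsHermitian) : ℝ := ⨅ i, hA.eigenvalues i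

/-- The logarithmic norm `μ(A) = λ_max((A + Aᵀ)/2)` of a square real matrix. -/
def logNorm {r : ℕ} (A : Matrix (Fin r) (Fin r) ℝ) : ℝ :=
  lambdaMax (symmPart_isHermitian A)

/-- The operator norm of a square real matrix, induced by the Euclidean norm. -/
def opNorm {r : ℕ} (A : Matrix (Fin r) (Fin r) ℝ) : ℝ :=
  ‖(Matrix.toEuclideanCLM (𝕜 := ℝ) (n := Fin r) A :
      EuclideanSpace ℝ (Fin r) →L[ℝ] EuclideanSpace ℝ (Fin r))‖

/-- The Frobenius norm `‖A‖_F = √(tr(AᵀA))` of a square real matrix. -/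
def frobNorm {r : ℕ} (A : Matrix (Fin r) (Fin r) ℝ) : ℝ :=
  Real.sqrt (Matrix.trace (Aᵀ * A))

/-! ### Auxiliary lemmas -/

lemma trace_nonneg_of_psd {n : Type*} [Fintype n] [DecidableEq n] {P : Matrix n n ℝ}
    (hP : P.PosSemidef) : 0 ≤ P.trace := by
  rw [Matrix.trace]
  apply Finset.sum_nonneg
  intro i _
  have := hP.dotProduct_mulVec_nonneg (Pi.single i 1)
  simpa [dotProduct, Matrix.mulVec, Pi.single_apply] using this

lemma trace_mul_nonneg {n : Type*} [Fintype n] [DecidableEq n] {P Q : Matrix n n ℝ}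
    (hP : P.PosSemidef) (hQ : Q.PosSemidef) : 0 ≤ (P * Q).trace := by
  open scoped MatrixOrder in
  obtain ⟨B, rfl⟩ := CStarAlgebra.nonneg_iff_eq_star_mul_self.mp hQ.nonneg
  rw [← mul_assoc, Matrix.trace_mul_comm, ← mul_assoc]
  exact trace_nonneg_of_psd (hP.mul_mul_conjTranspose_same B)

lemma smul_one_sub_psd {n : Type*} [Fintype n] [DecidableEq n] {M : Matrix n n ℝ}
    (hM : M.IsHermitian) (c : ℝ) (hc : ∀ i, hM.eigenvalues i ≤ c) :
    (c • (1 : Matrix n n ℝ) - M).PosSemidef := by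
  let U : Matrix n n ℝ := hM.eigenvectorUnitary
  have hU : U * star U = 1 := (Matrix.mem_unitaryGroup_iff).mp hM.eigenvectorUnitary.2
  have key : c • (1 : Matrix n n ℝ) - M
      = U * Matrix.diagonal (fun i => c - hM.eigenvalues i) * star U := by
    have hspec := hM.spectral_theorem
    have h1 : c • (1 : Matrix n n ℝ) = U * (c • (1 : Matrix n n ℝ)) * star U := by
      rw [Matrix.mul_smul, Matrix.smul_mul, mul_one, hU]
    conv_lhs => rw [hspec, Unitary.conjStarAlgAut_apply, h1]
    rw [← Matrix.sub_mul, ← Matrix.mul_sub]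
    congr 1
    congr 1
    ext i j
    by_cases h : i = j <;> simp [Matrix.diagonal, h, Matrix.one_apply]
  rw [key]
  exact (Matrix.posSemidef_diagonal_iff.mpr fun i => sub_nonneg.mpr (hc i)).mul_mul_conjTranspose_same U

lemma trace_mul_le_of_psd {n : Type*} [Fintype n] [DecidableEq n] {M P : Matrix n n ℝ}
    (hM : M.IsHermitian) (hP : P.PosSemidef) (c : ℝ) (hc : ∀ i, hM.eigenvalues i ≤ c) :
    (M * P).trace ≤ c * P.trace := by
  have h := trace_mul_nonneg (smul_one_sub_psd hM c hc) hP
  rw [Matrix.sub_mul, Matrix.smul_mul, one_mul, Matrix.trace_sub, Matrix.trace_smul] at h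
  simpa using sub_nonneg.mp h

lemma trace_conj {n : Type*} [Fintype n] [DecidableEq n] (U X : Matrix n n ℝ)
    (hU : star U * U = 1) : (U * X * star U).trace = X.trace := by
  rw [Matrix.trace_mul_cycle, hU, one_mul]

lemma trace_sq_eq {n : Type*} [Fintype n] [DecidableEq n] {Q : Matrix n n ℝ}
    (hQ : Q.IsHermitian) : (Q * Q).trace = ∑ i, hQ.eigenvalues i ^ 2 := by
  have hU : star (hQ.eigenvectorUnitary : Matrix n n ℝ) * hQ.eigenvectorUnitary = 1 :=
    (Matrix.mem_unitaryGroup_iff').mp hQ.eigenvectorUnitary.2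
  set U : Matrix n n ℝ := (hQ.eigenvectorUnitary : Matrix n n ℝ) with hUdef
  set D : Matrix n n ℝ := Matrix.diagonal (RCLike.ofReal ∘ hQ.eigenvalues) with hDdef
  have key : Q * Q = U * (D * D) * star U := by
    rw [hQ.spectral_theorem]
    calc (U * D * star U) * (U * D * star U)
        = U * D * (star U * U) * (D * star U) := by noncomm_ring
      _ = U * (D * D) * star U := by rw [hU]; noncomm_ring
  rw [key, trace_conj _ _ hU, hDdef]
  rw [Matrix.diagonal_mul_diagonal, Matrix.trace_diagonal]
  simp [sq]

lemma trace_eq_sum_eigen {n : Type*} [Fintype n] [DecidableEq n] {Q : Matrix n n ℝ}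
    (hQ : Q.IsHermitian) : Q.trace = ∑ i, hQ.eigenvalues i := by
  have hU : star (hQ.eigenvectorUnitary : Matrix n n ℝ) * hQ.eigenvectorUnitary = 1 :=
    (Matrix.mem_unitaryGroup_iff').mp hQ.eigenvectorUnitary.2
  conv_lhs => rw [hQ.spectral_theorem, Unitary.conjStarAlgAut_apply]
  rw [trace_conj _ _ hU, Matrix.trace_diagonal]
  simp

lemma ode_bound (f f' : ℝ → ℝ) (hf : ∀ t, HasDerivAt f (f' t) t)
    (c b : ℝ) (hc : c < 0) (hle : ∀ t, f' t ≤ c * f t + b) :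
    ∀ t ≥ (0 : ℝ), f t ≤ max (f 0) (-b / c) := by
  set h : ℝ → ℝ := fun t => Real.exp (-c * t) * (f t + b / c) with hh
  have hder : ∀ t, HasDerivAt h (Real.exp (-c * t) * (-c) * (f t + b / c)
      + Real.exp (-c * t) * f' t) t := by
    intro t
    have := (((hasDerivAt_id t).const_mul (-c)).exp).fun_mul ((hf t).add_const (b / c))
    simpa [hh] using this
  have hanti : Antitone h := by
    apply antitone_of_deriv_nonpos
    · exact fun t => (hder t).differentiableAt
    · intro t
      rw [(hder t).deriv]
      have hexp : (0:ℝ) < Real.exp (-c * t) := Real.exp_pos _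
      have : Real.exp (-c * t) * (-c) * (f t + b / c) + Real.exp (-c * t) * f' t
          = Real.exp (-c * t) * (f' t - (c * f t + b)) := by
        have hc0 : c ≠ 0 := ne_of_lt hc
        field_simp
        ring
      rw [this]
      exact mul_nonpos_of_nonneg_of_nonpos hexp.le (sub_nonpos.mpr (hle t))
  intro t ht
  have h0 : h t ≤ h 0 := hanti ht
  simp only [hh, mul_zero, Real.exp_zero, one_mul] at h0
  by_cases hcase : f t + b / c ≤ 0
  · refine le_trans ?_ (le_max_right _ _)
    rw [neg_div]
    linarith
  · push_neg at hcase
    have hexp1 : (1:ℝ) ≤ Real.exp (-c * t) :=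
      Real.one_le_exp (by nlinarith)
    have : f t + b / c ≤ Real.exp (-c * t) * (f t + b / c) := le_mul_of_one_le_left hcase.le hexp1
    have : f t ≤ f 0 := by linarith
    exact this.trans (le_max_left _ _)

lemma frobNorm_le_trace {r : ℕ} {Q : Matrix (Fin r) (Fin r) ℝ} (hQ : Q.PosSemidef) :
    frobNorm Q ≤ Q.trace := by
  have hH := hQ.1
  have hT : Qᵀ = Q := by
    have := hQ.1
    rw [Matrix.IsHermitian] at this
    calc Qᵀ = Qᴴ := by ext i j; simp [Matrix.conjTranspose_apply]
    _ = Q := this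
  rw [frobNorm, hT, trace_sq_eq hQ.1]
  have hsum : ∑ i, hQ.1.eigenvalues i ^ 2 ≤ (∑ i, hQ.1.eigenvalues i) ^ 2 :=
    Finset.sum_sq_le_sq_sum_of_nonneg (fun i _ => hQ.eigenvalues_nonneg i)
  calc Real.sqrt (∑ i, hQ.1.eigenvalues i ^ 2)
      ≤ Real.sqrt ((∑ i, hQ.1.eigenvalues i) ^ 2) := Real.sqrt_le_sqrt hsum
    _ = ∑ i, hQ.1.eigenvalues i :=
        Real.sqrt_sq (Finset.sum_nonneg fun i _ => hQ.eigenvalues_nonneg i)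
    _ = Q.trace := (trace_eq_sum_eigen hQ.1).symm

/-- if `μ(A) < 0`, the trace (equivalently the Frobenius norm) of the
Riccati flow is uniformly bounded in time. -/
theorem riccati_uniform_bound {r : ℕ}
    (A S R : Matrix (Fin r) (Fin r) ℝ) (hS : S.PosSemidef) (hR : R.PosSemidef)
    (hμ : logNorm A < 0)
    (P : ℝ → Matrix (Fin r) (Fin r) ℝ)
    (hP : ∀ t i j, HasDerivAt (fun u => P u i j)
      ((A * P t + P t * Aᵀ - P t * S * P t + R) i j) t)
    (hpsd : ∀ t, (P t).PosSemidef) :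
    (∃ C : ℝ, ∀ t ≥ (0 : ℝ), Matrix.trace (P t) ≤ C) ∧
    (∃ C : ℝ, ∀ t ≥ (0 : ℝ), frobNorm (P t) ≤ C) := by
  -- rule out `r = 0`
  rcases Nat.eq_zero_or_pos r with hr | hr
  · subst hr
    exfalso
    have : logNorm A = 0 := by
      rw [logNorm, lambdaMax]
      exact Real.iSup_of_isEmpty _
    linarith
  haveI : Nonempty (Fin r) := Fin.pos_iff_nonempty.mp hr
  set M := symmPart A with hMdef
  have hM := symmPart_isHermitian A
  have heig : ∀ i, hM.eigenvalues i ≤ logNorm A := fun i =>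
    le_ciSup (Set.Finite.bddAbove (Set.finite_range _)) i
  set c : ℝ := 2 * logNorm A with hcdef
  have hc : c < 0 := by rw [hcdef]; linarith
  set b : ℝ := R.trace with hbdef
  set f : ℝ → ℝ := fun t => (P t).trace with hf
  set f' : ℝ → ℝ := fun t => (A * P t + P t * Aᵀ - P t * S * P t + R).trace with hf'
  have hfderiv : ∀ t, HasDerivAt f (f' t) t := by
    intro t
    have := HasDerivAt.fun_sum (fun i (_ : i ∈ Finset.univ) => hP t i i)
    simpa [hf, hf', Matrix.trace, Matrix.diag] using this
  have hbound : ∀ t, f' t ≤ c * f t + b := by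
    intro t
    have h2M : A + Aᵀ = (2:ℝ) • M := by
      rw [hMdef, symmPart]; ext i j; simp; ring
    have htr1 : (A * P t).trace + (P t * Aᵀ).trace = 2 * (M * P t).trace := by
      rw [Matrix.trace_mul_comm (P t) Aᵀ, ← Matrix.trace_add, ← Matrix.add_mul, h2M,
        Matrix.smul_mul, Matrix.trace_smul]
      simp
    have htr2 : (M * P t).trace ≤ logNorm A * (P t).trace :=
      trace_mul_le_of_psd hM (hpsd t) _ heig
    have htr3 : 0 ≤ (P t * S * P t).trace := by
      have : P t * S * P t = (P t)ᴴ * S * P t := by rw [(hpsd t).1]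
      rw [this]
      exact trace_nonneg_of_psd (hS.conjTranspose_mul_mul_same (P t))
    have hexp : f' t = (A * P t).trace + (P t * Aᵀ).trace - (P t * S * P t).trace + R.trace := by
      rw [hf']; simp [Matrix.trace_add, Matrix.trace_sub]
    rw [hexp, htr1, hcdef, hbdef, hf]
    nlinarith
  have hmain := ode_bound f f' hfderiv c b hc hbound
  refine ⟨⟨max (f 0) (-b / c), hmain⟩, ⟨max (f 0) (-b / c), fun t ht => ?_⟩⟩
  exact (frobNorm_le_trace (hpsd t)).trans (hmain t ht)
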